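/- Consider a commutative square of functors with i : K' ⥤ K and j : L' ⥤ L fully faithful, injective on objects, and isofibrations, f : K ⥤ L, f' : K' ⥤ L' with f ∘ i = j ∘ f'. Then the induced functor K' ⥤ K ×_L L' into the strict pullback is an equivalence if and only if (1) an object k of K is in the essential image of i exactly when f(k) is in the essential image of j, and (2) a morphism t : i(k₀') → i(k₁') is in the image of i exactly when f(t) is in the image of j. -/

import Mathlib

open CategoryTheory

universe v₁ v₂ v₃ v₄ u₁ u₂ u₃ u₄

/-- A functor is an isofibration if every isomorphism in the base whose source has a lift
lifts to an isomorphism. -/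
def Isofibration {A : Type u₁} [Category.{v₁} A] {B : Type u₂} [Category.{v₂} B]
    (F : A ⥤ B) : Prop :=
  ∀ (a : A) (b : B) (e : F.obj a ≅ b),
    ∃ (a' : A) (e' : a ≅ a') (hb : F.obj a' = b), F.map e'.hom = e.hom ≫ eqToHom hb.symm

/-- The strict pullback of categories along `f : K ⥤ L` and `j : L' ⥤ L`:
objects are pairs `(k, l')` with `f.obj k = j.obj l'`. -/
structure StrictPullback {K : Type u₁} [Category.{v₁} K] {L : Type u₂} [Category.{v₂} L]
    {L' : Type u₃} [Category.{v₃} L'] (f : K ⥤ L) (j : L' ⥤ L) where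
  k : K
  l : L'
  w : f.obj k = j.obj l

instance StrictPullback.category {K : Type u₁} [Category.{v₁} K] {L : Type u₂} [Category.{v₂} L]
    {L' : Type u₃} [Category.{v₃} L'] (f : K ⥤ L) (j : L' ⥤ L) :
    Category (StrictPullback f j) where
  Hom a b := {tu : (a.k ⟶ b.k) × (a.l ⟶ b.l) //
    f.map tu.1 = eqToHom a.w ≫ j.map tu.2 ≫ eqToHom b.w.symm}
  id a := ⟨(𝟙 a.k, 𝟙 a.l), by simp⟩
  comp {a b c} α β := ⟨(α.1.1 ≫ β.1.1, α.1.2 ≫ β.1.2), by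
    simp [α.2, β.2]⟩
  id_comp α := by apply Subtype.ext; simp
  comp_id α := by apply Subtype.ext; simp
  assoc α β γ := by apply Subtype.ext; simp

/-- The functor `K' ⥤ K ×_L L'` induced by a strictly commuting square `i ⋙ f = f' ⋙ j`. -/
def inducedToPullback {K' : Type u₄} [Category.{v₄} K'] {K : Type u₁} [Category.{v₁} K]
    {L : Type u₂} [Category.{v₂} L] {L' : Type u₃} [Category.{v₃} L']
    (i : K' ⥤ K) (j : L' ⥤ L) (f : K ⥤ L) (f' : K' ⥤ L') (h : i ⋙ f = f' ⋙ j) :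
    K' ⥤ StrictPullback f j where
  obj k' := ⟨i.obj k', f'.obj k', Functor.congr_obj h k'⟩
  map {a b} t := ⟨(i.map t, f'.map t), by
    have := Functor.congr_hom h t
    simpa using this⟩
  map_id a := by
    apply Subtype.ext
    show (i.map (𝟙 a), f'.map (𝟙 a)) = (𝟙 (i.obj a), 𝟙 (f'.obj a))
    simp
  map_comp {a b c} α β := by
    apply Subtype.ext
    show (i.map (α ≫ β), f'.map (α ≫ β)) = (i.map α ≫ i.map β, f'.map α ≫ f'.map β)
    simp


section Aux
variable {K : Type u₁} [Category.{v₁} K] {L : Type u₂} [Category.{v₂} L]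
    {L' : Type u₃} [Category.{v₃} L'] {f : K ⥤ L} {j : L' ⥤ L}

@[simp] lemma StrictPullback.comp_val {a b c : StrictPullback f j} (α : a ⟶ b) (β : b ⟶ c) :
    (α ≫ β).1 = (α.1.1 ≫ β.1.1, α.1.2 ≫ β.1.2) := rfl

@[simp] lemma StrictPullback.id_val (a : StrictPullback f j) :
    (𝟙 a : a ⟶ a).1 = (𝟙 a.k, 𝟙 a.l) := rfl

/-- Build an iso in the strict pullback from componentwise isos. -/
def StrictPullback.mkIso {a b : StrictPullback f j}
    (e₁ : a.k ≅ b.k) (e₂ : a.l ≅ b.l)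
    (w : f.map e₁.hom = eqToHom a.w ≫ j.map e₂.hom ≫ eqToHom b.w.symm) : a ≅ b where
  hom := ⟨(e₁.hom, e₂.hom), w⟩
  inv := ⟨(e₁.inv, e₂.inv), by
    have h1 : f.map e₁.hom ≫ f.map e₁.inv = 𝟙 _ := by
      rw [← f.map_comp, e₁.hom_inv_id, f.map_id]
    have := w ▸ h1
    calc f.map e₁.inv = 𝟙 _ ≫ f.map e₁.inv := by simp
      _ = (eqToHom b.w ≫ j.map e₂.inv ≫ eqToHom a.w.symm ≫ f.map e₁.hom) ≫ f.map e₁.inv := by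
          rw [w]; simp
      _ = eqToHom b.w ≫ j.map e₂.inv ≫ eqToHom a.w.symm := by
          simp only [Category.assoc, h1, Category.comp_id]⟩
  hom_inv_id := by apply Subtype.ext; simp
  inv_hom_id := by apply Subtype.ext; simp

/-- The first component of an iso in the strict pullback is an iso. -/
def StrictPullback.isoFst {a b : StrictPullback f j} (e : a ≅ b) : a.k ≅ b.k where
  hom := e.hom.1.1
  inv := e.inv.1.1
  hom_inv_id := congrArg (fun x => x.1.1) e.hom_inv_id
  inv_hom_id := congrArg (fun x => x.1.1) e.inv_hom_id

end Aux

/-- For a commuting square of functors with `i` and `j` fully faithful, injective on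
objects, and isofibrations, the induced functor to the strict pullback is an equivalence
iff (1) an object `k` of `K` is essentially in the image of `i` exactly when `f k` is
essentially in the image of `j`, and (2) a morphism `t : i k₀' ⟶ i k₁'` is in the image of
`i` exactly when `f t` is in the image of `j`. -/

theorem inducedToPullback_isEquivalence_iff
    {K' : Type u₄} [Category.{v₄} K'] {K : Type u₁} [Category.{v₁} K]
    {L : Type u₂} [Category.{v₂} L] {L' : Type u₃} [Category.{v₃} L']
    (i : K' ⥤ K) (j : L' ⥤ L) (f : K ⥤ L) (f' : K' ⥤ L') (h : i ⋙ f = f' ⋙ j)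
    [i.Full] [i.Faithful] [j.Full] [j.Faithful]
    (hi_inj : Function.Injective i.obj) (hj_inj : Function.Injective j.obj)
    (hi_isofib : Isofibration i) (hj_isofib : Isofibration j) :
    (inducedToPullback i j f f' h).IsEquivalence ↔
      ((∀ k : K, (∃ k' : K', Nonempty (i.obj k' ≅ k)) ↔
          (∃ l' : L', Nonempty (j.obj l' ≅ f.obj k))) ∧
       (∀ (k₀' k₁' : K') (t : i.obj k₀' ⟶ i.obj k₁'),
          (∃ t' : k₀' ⟶ k₁', i.map t' = t) ↔
          (∃ u : f'.obj k₀' ⟶ f'.obj k₁',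
            f.map t = eqToHom (Functor.congr_obj h k₀') ≫ j.map u ≫
              eqToHom (Functor.congr_obj h k₁').symm))) := by
  constructor
  · intro hG
    haveI := hG
    constructor
    · intro k
      constructor
      · rintro ⟨k', ⟨e⟩⟩
        exact ⟨f'.obj k', ⟨eqToIso (Functor.congr_obj h k').symm ≪≫ f.mapIso e⟩⟩
      · rintro ⟨l', ⟨e⟩⟩
        obtain ⟨l'', e', hb, -⟩ := hj_isofib l' (f.obj k) e
        let X : StrictPullback f j := ⟨k, l'', hb.symm⟩
        exact ⟨(inducedToPullback i j f f' h).objPreimage X,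
          ⟨StrictPullback.isoFst ((inducedToPullback i j f f' h).objObjPreimageIso X)⟩⟩
    · intro k₀' k₁' t
      constructor
      · rintro ⟨t', rfl⟩
        refine ⟨f'.map t', ?_⟩
        have := Functor.congr_hom h t'
        simpa using this
      · rintro ⟨u, hu⟩
        let m : (inducedToPullback i j f f' h).obj k₀' ⟶ (inducedToPullback i j f f' h).obj k₁' :=
          ⟨(t, u), hu⟩
        obtain ⟨t', ht'⟩ := (inducedToPullback i j f f' h).map_surjective m
        exact ⟨t', congrArg (fun x => x.1.1) ht'⟩
  · rintro ⟨h1, h2⟩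
    have hfaith : (inducedToPullback i j f f' h).Faithful := by
      constructor
      intro a b s t hst
      apply i.map_injective
      exact congrArg (fun x => x.1.1) hst
    have hfull : (inducedToPullback i j f f' h).Full := by
      constructor
      intro k₀' k₁' m
      obtain ⟨t', ht'⟩ := (h2 k₀' k₁' m.1.1).2 ⟨m.1.2, m.2⟩
      refine ⟨t', ?_⟩
      apply Subtype.ext
      have hu : f'.map t' = m.1.2 := by
        apply j.map_injective
        have hc := Functor.congr_hom h t'
        simp only [Functor.comp_map] at hc
        rw [ht'] at hc
        erw [m.2] at hc
        rw [← cancel_epi (eqToHom (Functor.congr_obj h k₀')),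
          ← cancel_mono (eqToHom (Functor.congr_obj h k₁').symm)]
        simp only [Category.assoc]
        exact hc.symm
      exact Prod.ext ht' hu
    have hss : (inducedToPullback i j f f' h).EssSurj := by
      constructor
      intro X
      obtain ⟨k, l', w⟩ := X
      obtain ⟨k', ⟨e⟩⟩ := (h1 k).2 ⟨l', ⟨eqToIso w.symm⟩⟩
      let φ : j.obj (f'.obj k') ≅ j.obj l' :=
        eqToIso (Functor.congr_obj h k').symm ≪≫ f.mapIso e ≪≫ eqToIso w
      refine ⟨k', ⟨StrictPullback.mkIso e (j.preimageIso φ) ?_⟩⟩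
      show f.map e.hom = eqToHom (Functor.congr_obj h k') ≫ j.map (j.preimage φ.hom) ≫ eqToHom w.symm
      rw [j.map_preimage]
      simp [φ]
    exact { faithful := hfaith, full := hfull, essSurj := hss }
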